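/- Let 𝓕 ⊆ 2^[n] be a set system, 𝔽 a field, and ≺ the lexicographic term order with x_{i_1} ≻ x_{i_2} ≻ ⋯ ≻ x_{i_n}. Then, identifying squarefree monomials with subsets of [n], Sm(I(𝓕)) = D_{i_n, i_{n−1}, …, i_1}(𝓕). -/

import Mathlib

open MvPolynomial

/-- Monomials of `𝔽[x_1,…,x_n]` identified with their exponent vectors. -/
abbrev Mon (n : ℕ) := Fin n →₀ ℕ

/-- A linear order on monomials is a term order if `1` (i.e. the zero exponent
vector) is minimal and the order is compatible with multiplication by monomials. -/
def IsTermOrder {n : ℕ} (lin : LinearOrder (Mon n)) : Prop :=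
  (∀ u : Mon n, lin.le 0 u) ∧
    ∀ u v w : Mon n, lin.le u v → lin.le (u + w) (v + w)

/-- The strict lexicographic comparison of exponent vectors induced by the variable
ordering `x_{σ 0} ≻ x_{σ 1} ≻ ⋯ ≻ x_{σ (n-1)}`. -/
def lexLt {n : ℕ} (σ : Equiv.Perm (Fin n)) (u v : Mon n) : Prop :=
  ∃ j : Fin n, u (σ j) < v (σ j) ∧ ∀ i : Fin n, i < j → u (σ i) = v (σ i)

/-- `lin` is the lexicographic term order induced by the variable ordering
`x_{σ 0} ≻ x_{σ 1} ≻ ⋯ ≻ x_{σ (n-1)}`. -/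
def IsLexOrder {n : ℕ} (σ : Equiv.Perm (Fin n)) (lin : LinearOrder (Mon n)) : Prop :=
  ∀ u v : Mon n, lin.lt u v ↔ lexLt σ u v

/-- `m` is the leading monomial of `f` with respect to the monomial order `lin`. -/
def IsLeadMon {n : ℕ} {F : Type*} [CommSemiring F] (lin : LinearOrder (Mon n))
    (f : MvPolynomial (Fin n) F) (m : Mon n) : Prop :=
  m ∈ f.support ∧ ∀ m' ∈ f.support, lin.le m' m

/-- The set of standard monomials of an ideal `I` with respect to the monomial
order `lin`: monomials that are not the leading monomial of any nonzero `f ∈ I`. -/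
def stdMon {n : ℕ} {F : Type*} [CommSemiring F] (lin : LinearOrder (Mon n))
    (I : Ideal (MvPolynomial (Fin n) F)) : Set (Mon n) :=
  { m | ¬ ∃ f ∈ I, f ≠ 0 ∧ IsLeadMon lin f m }

/-- The vanishing ideal of a point set `V ⊆ F^n`. -/
def vanishIdeal {n : ℕ} {F : Type*} [CommRing F] (V : Set (Fin n → F)) :
    Ideal (MvPolynomial (Fin n) F) where
  carrier := { f | ∀ v ∈ V, MvPolynomial.eval v f = 0 }
  add_mem' := by
    intro a b ha hb v hv
    simp [map_add, ha v hv, hb v hv]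
  zero_mem' := by intro v hv; simp
  smul_mem' := by
    intro c f hf v hv
    simp [smul_eq_mul, hf v hv]

/-- A finite point set (in `{0,…,k-1}^n`, over any field) is extremal if its vanishing
ideal has the same standard monomials for every lexicographic term order. -/
def IsExtremal {n : ℕ} {F : Type*} [CommRing F] (V : Set (Fin n → F)) : Prop :=
  ∀ (σ₁ σ₂ : Equiv.Perm (Fin n)) (lin₁ lin₂ : LinearOrder (Mon n)),
    IsLexOrder σ₁ lin₁ → IsLexOrder σ₂ lin₂ →
      stdMon lin₁ (vanishIdeal V) = stdMon lin₂ (vanishIdeal V)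

/-- Embedding of a point of `{0,…,k-1}^n` into `F^n`. -/
def toField {n k : ℕ} (F : Type*) [Field F] (w : Fin n → Fin k) : Fin n → F :=
  fun i => ((w i : ℕ) : F)

/-- Identification of a point of `{0,…,k-1}^n` with an exponent vector in `ℕ^n`. -/
noncomputable def toExp {n k : ℕ} (w : Fin n → Fin k) : Mon n :=
  Finsupp.equivFunOnFinite.symm fun i => (w i : ℕ)

/-- The downshift `D_i(V)` of `V ⊆ {0,…,k-1}^n` at coordinate `i`: its `i`-section at
each choice of the other coordinates is `{0,1,…,m-1}` where `m` is the size of the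
corresponding `i`-section of `V`. -/
def downshift {n k : ℕ} (V : Finset (Fin n → Fin k)) (i : Fin n) :
    Finset (Fin n → Fin k) :=
  Finset.univ.filter fun w =>
    (w i : ℕ) < (Finset.univ.filter fun α : Fin k => Function.update w i α ∈ V).card

/-- The iterated downshift `D_{σ(n-1)}(D_{σ(n-2)}(⋯(D_{σ 0}(V))))`,
i.e. downshifts are applied at coordinates `σ 0, σ 1, …, σ (n-1)` in this order. -/
def iterDownshift {n k : ℕ} (σ : Equiv.Perm (Fin n)) (V : Finset (Fin n → Fin k)) :
    Finset (Fin n → Fin k) :=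
  (List.ofFn fun j : Fin n => σ j).foldl downshift V

/-- A polynomial is degree dominated (with dominating term `x^w`) if it equals
`x^w + Σ αᵢ x^{vᵢ}` where each `x^{vᵢ}` divides `x^w`. -/
def IsDegDominated {n : ℕ} {F : Type*} [CommSemiring F]
    (f : MvPolynomial (Fin n) F) : Prop :=
  ∃ w : Mon n, MvPolynomial.coeff w f = 1 ∧ ∀ v ∈ f.support, v ≤ w

/-- `G` is a Gröbner basis of `I` with respect to the monomial order `lin`:
`G ⊆ I` and for every nonzero `f ∈ I` some `g ∈ G` has leading monomial dividing
the leading monomial of `f` (divisibility of monomials being `≤` of exponents). -/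
def IsGroebner {n : ℕ} {F : Type*} [CommSemiring F] (lin : LinearOrder (Mon n))
    (G : Finset (MvPolynomial (Fin n) F)) (I : Ideal (MvPolynomial (Fin n) F)) : Prop :=
  (∀ g ∈ G, g ∈ I) ∧
    ∀ f ∈ I, f ≠ 0 → ∀ m : Mon n, IsLeadMon lin f m →
      ∃ g ∈ G, ∃ mg : Mon n, IsLeadMon lin g mg ∧ mg ≤ m

/-- `G` is a universal Gröbner basis of `I` if it is a Gröbner basis for every term order. -/
def IsUnivGroebner {n : ℕ} {F : Type*} [CommSemiring F]
    (G : Finset (MvPolynomial (Fin n) F)) (I : Ideal (MvPolynomial (Fin n) F)) : Prop :=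
  ∀ lin : LinearOrder (Mon n), IsTermOrder lin → IsGroebner lin G I

/-- A term order is an elimination order with respect to `x_i` if `x_i` is greater
than every monomial not involving `x_i`. -/
def IsElimOrder {n : ℕ} (lin : LinearOrder (Mon n)) (i : Fin n) : Prop :=
  IsTermOrder lin ∧ ∀ m : Mon n, m i = 0 → lin.lt m (Finsupp.single i 1)

/-- A set system `𝓕` shatters `S` if every subset of `S` is the intersection of `S`
with a member of `𝓕`. -/
def Shatters {n : ℕ} (𝓕 : Finset (Finset (Fin n))) (S : Finset (Fin n)) : Prop :=
  ∀ T ⊆ S, ∃ Fm ∈ 𝓕, Fm ∩ S = T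

open scoped Classical in
/-- The family `Sh(𝓕)` of sets shattered by `𝓕`. -/
noncomputable def shatteredFamily {n : ℕ} (𝓕 : Finset (Finset (Fin n))) :
    Finset (Finset (Fin n)) :=
  Finset.univ.filter fun S => Shatters 𝓕 S

/-- A set system is shattering-extremal if it shatters exactly `|𝓕|` sets. -/
def IsSExtremal {n : ℕ} (𝓕 : Finset (Finset (Fin n))) : Prop :=
  (shatteredFamily 𝓕).card = 𝓕.card

/-- The characteristic vector of a set, as a point of `F^n`. -/
def charVec {n : ℕ} (F : Type*) [Field F] (Fm : Finset (Fin n)) : Fin n → F :=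
  fun i => if i ∈ Fm then 1 else 0

/-- The squarefree monomial `∏_{i ∈ S} x_i` associated to a set `S ⊆ [n]`,
as an exponent vector. -/
noncomputable def setMon {n : ℕ} (S : Finset (Fin n)) : Mon n :=
  Finsupp.equivFunOnFinite.symm fun i => if i ∈ S then 1 else 0

/-- The polynomial `f_{S,H} = (∏_{i∈H} x_i) ⬝ ∏_{i∈S∖H} (x_i - 1)`. -/
noncomputable def fSH {n : ℕ} (F : Type*) [Field F] (S H : Finset (Fin n)) :
    MvPolynomial (Fin n) F :=
  (∏ i ∈ H, X i) * ∏ i ∈ S \ H, (X i - 1)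

/-- The downshift `D_i(𝓕)` of a set system. -/
def dshiftSet {n : ℕ} (𝓕 : Finset (Finset (Fin n))) (i : Fin n) :
    Finset (Finset (Fin n)) :=
  𝓕.image (fun Fm => Fm.erase i) ∪ 𝓕.filter fun Fm => i ∈ Fm ∧ Fm.erase i ∈ 𝓕

/-- The iterated downshift `D_{σ(n-1)}(⋯(D_{σ 0}(𝓕)))` of a set system:
downshifts are applied at `σ 0, σ 1, …, σ (n-1)` in this order. -/
def iterDshiftSet {n : ℕ} (σ : Equiv.Perm (Fin n)) (𝓕 : Finset (Finset (Fin n))) :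
    Finset (Finset (Fin n)) :=
  (List.ofFn fun j : Fin n => σ j).foldl dshiftSet 𝓕

/-- Restriction of an exponent vector in `ℕ^{n+1}` to its first `n` coordinates. -/
noncomputable def restrictMon {n : ℕ} (w : Mon (n + 1)) : Mon n :=
  Finsupp.equivFunOnFinite.symm fun i => w i.castSucc

/-! ### Auxiliary lemmas -/

section LexBasics
variable {n : ℕ}

lemma lexLt_wf (σ : Equiv.Perm (Fin n)) : WellFounded (lexLt σ) := by
  have h : WellFounded (Pi.Lex ((· < ·) : Fin n → Fin n → Prop)
      (fun {_ : Fin n} => ((· < ·) : ℕ → ℕ → Prop))) :=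
    Pi.Lex.wellFounded _ (fun _ => Nat.lt_wfRel.wf)
  have h2 := InvImage.wf (fun (u : Mon n) (j : Fin n) => u (σ j)) h
  refine Subrelation.wf ?_ h2
  intro u v hlt
  obtain ⟨j, hj1, hj2⟩ := hlt
  exact ⟨j, fun k hk => hj2 k hk, hj1⟩

lemma lexLt_of_le_of_ne {σ : Equiv.Perm (Fin n)} {u v : Mon n}
    (hle : ∀ i, u i ≤ v i) (hne : u ≠ v) : lexLt σ u v := by
  classical
  set s := Finset.univ.filter (fun j : Fin n => u (σ j) ≠ v (σ j)) with hs
  have hsne : s.Nonempty := by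
    by_contra hc
    rw [Finset.not_nonempty_iff_eq_empty] at hc
    apply hne
    ext i
    have := Finset.eq_empty_iff_forall_notMem.mp hc (σ.symm i)
    simp only [hs, Finset.mem_filter, Finset.mem_univ, true_and, not_not] at this
    simpa using this
  refine ⟨s.min' hsne, ?_, ?_⟩
  · have hmem := s.min'_mem hsne
    simp only [hs, Finset.mem_filter, Finset.mem_univ, true_and] at hmem
    exact lt_of_le_of_ne (hle _) hmem
  · intro i hi
    by_contra hne'
    have : s.min' hsne ≤ i := s.min'_le i (by simp [hs, hne'])
    exact absurd hi (not_lt.mpr this)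

lemma lexLt_add_right {σ : Equiv.Perm (Fin n)} {u v : Mon n} (w : Mon n)
    (h : lexLt σ u v) : lexLt σ (u + w) (v + w) := by
  obtain ⟨j, hj1, hj2⟩ := h
  exact ⟨j, by simpa using hj1, fun i hi => by simp [hj2 i hi]⟩

variable {lin : LinearOrder (Mon n)} {σ : Equiv.Perm (Fin n)}

lemma le_of_lexLt (hlin : IsLexOrder σ lin) {u v : Mon n} (h : lexLt σ u v) :
    lin.le u v :=
  @le_of_lt _ lin.toPartialOrder.toPreorder u v ((hlin u v).mpr h)

lemma lexLt_or_of_not (hlin : IsLexOrder σ lin) {u v : Mon n} (h : ¬ lexLt σ u v) :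
    u = v ∨ lexLt σ v u := by
  rcases @lt_trichotomy _ lin u v with h1 | h1 | h1
  · exact absurd ((hlin u v).mp h1) h
  · exact Or.inl h1
  · exact Or.inr ((hlin v u).mp h1)

lemma exists_leadMon {F : Type*} [CommSemiring F] (lin : LinearOrder (Mon n))
    {f : MvPolynomial (Fin n) F} (hf : f ≠ 0) : ∃ m, IsLeadMon lin f m := by
  have hne : f.support.Nonempty := MvPolynomial.support_nonempty.mpr hf
  obtain ⟨m, hm, hmax⟩ := @Finset.exists_max_image (Mon n) (Mon n) lin f.support id hne
  exact ⟨m, hm, fun m' hm' => hmax m' hm'⟩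

end LexBasics
section Basics
variable {n : ℕ}

lemma setMon_apply (S : Finset (Fin n)) (i : Fin n) :
    setMon S i = if i ∈ S then 1 else 0 := rfl

lemma setMon_injective : Function.Injective (setMon (n := n)) := by
  intro S T h
  ext i
  have := congrFun (congrArg (fun m : Mon n => (m : Fin n → ℕ)) h) i
  simp only [setMon_apply] at this
  by_cases hS : i ∈ S <;> by_cases hT : i ∈ T <;> simp_all

lemma setMon_erase {S : Finset (Fin n)} {i : Fin n} (hi : i ∈ S) :
    setMon S = Finsupp.single i 1 + setMon (S.erase i) := by
  classical
  ext k
  simp only [Finsupp.add_apply, setMon_apply, Finsupp.single_apply]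
  by_cases hk : k = i
  · subst hk; simp [hi]
  · simp [hk, Ne.symm hk, Finset.mem_erase]

lemma charVec_injective (F : Type*) [Field F] :
    Function.Injective (charVec (n := n) F) := by
  intro S T h
  ext i
  have := congrFun h i
  simp only [charVec] at this
  by_cases hS : i ∈ S <;> by_cases hT : i ∈ T <;> simp_all

lemma mem_vanishIdeal {F : Type*} [CommRing F] {V : Set (Fin n → F)}
    {f : MvPolynomial (Fin n) F} :
    f ∈ vanishIdeal V ↔ ∀ v ∈ V, MvPolynomial.eval v f = 0 := Iff.rfl

lemma eval_eq_of_agree {F : Type*} [CommSemiring F] {f : MvPolynomial (Fin n) F}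
    {v w : Fin n → F} (h : ∀ k, (∃ m ∈ f.support, m k ≠ 0) → v k = w k) :
    MvPolynomial.eval v f = MvPolynomial.eval w f := by
  rw [MvPolynomial.eval_eq, MvPolynomial.eval_eq]
  apply Finset.sum_congr rfl
  intro m hm
  congr 1
  apply Finset.prod_congr rfl
  intro k _
  by_cases hk : m k = 0
  · simp [hk]
  · rw [h k ⟨m, hm, hk⟩]

noncomputable def indic {n : ℕ} (F : Type*) [Field F] (L G : Finset (Fin n)) :
    MvPolynomial (Fin n) F :=
  ∏ i ∈ L, (if i ∈ G then X i else 1 - X i)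

lemma vars_indic {F : Type*} [Field F] (L G : Finset (Fin n)) :
    (indic F L G).vars ⊆ L := by
  classical
  refine (MvPolynomial.vars_prod _).trans ?_
  intro k hk
  simp only [Finset.mem_biUnion] at hk
  obtain ⟨i, hi, hk⟩ := hk
  by_cases hg : i ∈ G
  · simp only [hg, if_pos, MvPolynomial.vars_X] at hk
    simpa [Finset.mem_singleton.mp hk] using hi
  · simp only [hg, if_neg, not_false_iff] at hk
    have := MvPolynomial.vars_sub_subset (p := (1 : MvPolynomial (Fin n) F)) (q := X i) hk
    simp only [MvPolynomial.vars_one, MvPolynomial.vars_X, Finset.union_comm,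
      Finset.empty_union, Finset.union_empty] at this
    simpa [Finset.mem_singleton.mp this] using hi

lemma eval_indic {F : Type*} [Field F] {L G H : Finset (Fin n)} (hG : G ⊆ L)
    (hH : H ⊆ L) :
    MvPolynomial.eval (charVec F H) (indic F L G) = if G = H then 1 else 0 := by
  classical
  rw [indic, map_prod]
  by_cases h : G = H
  · subst h
    rw [if_pos rfl]
    apply Finset.prod_eq_one
    intro i _
    by_cases hg : i ∈ G <;> simp [hg, charVec]
  · rw [if_neg h]
    have hex : ∃ i ∈ L, ¬ (i ∈ G ↔ i ∈ H) := by
      by_contra hc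
      push_neg at hc
      exact h (Finset.ext fun i => ⟨fun hi => (hc i (hG hi)).mp hi,
        fun hi => (hc i (hH hi)).mpr hi⟩)
    obtain ⟨i, hiL, hi⟩ := hex
    apply Finset.prod_eq_zero hiL
    by_cases hg : i ∈ G <;> by_cases hh : i ∈ H <;> simp_all [charVec]

lemma exists_interp (F : Type*) [Field F] (Lset : Finset (Fin n))
    (W : Finset (Finset (Fin n))) (hW : ∀ G ∈ W, G ⊆ Lset)
    (φ : Finset (Fin n) → F) :
    ∃ h : MvPolynomial (Fin n) F,
      (∀ G ∈ W, MvPolynomial.eval (charVec F G) h = φ G) ∧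
      (∀ m ∈ h.support, ∀ k, m k ≠ 0 → k ∈ Lset) := by
  classical
  refine ⟨∑ G ∈ W, MvPolynomial.C (φ G) * indic F Lset G, ?_, ?_⟩
  · intro G hG
    rw [map_sum]
    rw [Finset.sum_eq_single G]
    · rw [map_mul, eval_indic (hW G hG) (hW G hG)]
      simp
    · intro H hH hne
      rw [map_mul, eval_indic (hW H hH) (hW G hG)]
      simp [hne]
    · intro h; exact absurd hG h
  · intro m hm k hk
    have hv : k ∈ (∑ G ∈ W, MvPolynomial.C (φ G) * indic F Lset G).vars :=
      MvPolynomial.mem_vars k |>.mpr ⟨m, hm, Finsupp.mem_support_iff.mpr hk⟩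
    have h1 := MvPolynomial.vars_sum_subset (t := W)
      (φ := fun G => MvPolynomial.C (φ G) * indic F Lset G) hv
    simp only [Finset.mem_biUnion] at h1
    obtain ⟨G, _, hG⟩ := h1
    by_cases h0 : φ G = 0
    · simp [h0] at hG
    · rw [MvPolynomial.vars_C_mul _ h0] at hG
      exact vars_indic Lset G hG

end Basics
section Downshift
variable {n : ℕ}

/-- The sets of `𝓖` not containing `i`. -/
def fib0 (𝓖 : Finset (Finset (Fin n))) (i : Fin n) : Finset (Finset (Fin n)) :=
  𝓖.filter (fun G => i ∉ G)

/-- The sets of `𝓖` containing `i`, with `i` removed. -/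
noncomputable def fib1 (𝓖 : Finset (Finset (Fin n))) (i : Fin n) :
    Finset (Finset (Fin n)) :=
  (𝓖.filter (fun G => i ∈ G)).image (fun G => G.erase i)

lemma mem_fib0 {𝓖 : Finset (Finset (Fin n))} {i : Fin n} {G : Finset (Fin n)} :
    G ∈ fib0 𝓖 i ↔ G ∈ 𝓖 ∧ i ∉ G := by simp [fib0]

lemma not_mem_of_mem_fib0 {𝓖 : Finset (Finset (Fin n))} {i : Fin n}
    {G : Finset (Fin n)} (h : G ∈ fib0 𝓖 i) : i ∉ G := (mem_fib0.mp h).2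

lemma not_mem_of_mem_fib1 {𝓖 : Finset (Finset (Fin n))} {i : Fin n}
    {G : Finset (Fin n)} (h : G ∈ fib1 𝓖 i) : i ∉ G := by
  simp only [fib1, Finset.mem_image, Finset.mem_filter] at h
  obtain ⟨H, _, rfl⟩ := h
  exact Finset.notMem_erase i H

lemma mem_fib1 {𝓖 : Finset (Finset (Fin n))} {i : Fin n} {G : Finset (Fin n)}
    (hG : i ∉ G) : G ∈ fib1 𝓖 i ↔ insert i G ∈ 𝓖 := by
  simp only [fib1, Finset.mem_image, Finset.mem_filter]
  constructor
  · rintro ⟨H, ⟨hH, hiH⟩, rfl⟩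
    rwa [Finset.insert_erase hiH]
  · intro h
    exact ⟨insert i G, ⟨h, Finset.mem_insert_self i G⟩, Finset.erase_insert hG⟩

lemma mem_dshift {𝓖 : Finset (Finset (Fin n))} {i : Fin n} {G : Finset (Fin n)} :
    G ∈ dshiftSet 𝓖 i ↔ (∃ H ∈ 𝓖, H.erase i = G) ∨
      (G ∈ 𝓖 ∧ i ∈ G ∧ G.erase i ∈ 𝓖) := by
  classical
  simp [dshiftSet, and_assoc]

lemma dshift_subsets {𝓖 : Finset (Finset (Fin n))} {i : Fin n}
    {Lset : Finset (Fin n)} (h : ∀ G ∈ 𝓖, G ⊆ Lset) :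
    ∀ G ∈ dshiftSet 𝓖 i, G ⊆ Lset := by
  intro G hG
  rcases mem_dshift.mp hG with ⟨H, hH, rfl⟩ | ⟨h1, _, _⟩
  · exact (Finset.erase_subset i H).trans (h H hH)
  · exact h G h1

lemma card_fib (𝓖 : Finset (Finset (Fin n))) (i : Fin n) :
    (fib0 𝓖 i).card + (fib1 𝓖 i).card = 𝓖.card := by
  classical
  have h1 : (fib1 𝓖 i).card = (𝓖.filter (fun G => i ∈ G)).card := by
    apply Finset.card_image_of_injOn
    intro G hG H hH hGH
    simp only [Finset.coe_filter, Set.mem_setOf_eq] at hG hH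
    have hGH' : G.erase i = H.erase i := hGH
    rw [← Finset.insert_erase hG.2, hGH', Finset.insert_erase hH.2]
  rw [h1, fib0, add_comm]
  exact Finset.card_filter_add_card_filter_not _

lemma fib0_dshift_self (𝓖 : Finset (Finset (Fin n))) (i : Fin n) :
    fib0 (dshiftSet 𝓖 i) i = fib0 𝓖 i ∪ fib1 𝓖 i := by
  classical
  ext G
  by_cases hG : i ∈ G
  · simp only [mem_fib0, Finset.mem_union]
    constructor
    · rintro ⟨_, h⟩; exact absurd hG h
    · rintro (h | h)
      · exact absurd hG h.2
      · exact absurd hG (not_mem_of_mem_fib1 h)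
  · rw [mem_fib0, Finset.mem_union, mem_fib0, mem_fib1 hG, mem_dshift]
    constructor
    · rintro ⟨(⟨H, hH, rfl⟩ | ⟨h1, h2, _⟩), -⟩
      · by_cases hiH : i ∈ H
        · right; rwa [Finset.insert_erase hiH]
        · left; rw [Finset.erase_eq_of_notMem hiH]; exact ⟨hH, hiH⟩
      · exact absurd h2 hG
    · rintro (⟨h1, -⟩ | h1)
      · exact ⟨Or.inl ⟨G, h1, Finset.erase_eq_of_notMem hG⟩, hG⟩
      · exact ⟨Or.inl ⟨insert i G, h1, Finset.erase_insert hG⟩, hG⟩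

lemma fib1_dshift_self (𝓖 : Finset (Finset (Fin n))) (i : Fin n) :
    fib1 (dshiftSet 𝓖 i) i = fib0 𝓖 i ∩ fib1 𝓖 i := by
  classical
  ext G
  by_cases hG : i ∈ G
  · constructor
    · intro h; exact absurd hG (not_mem_of_mem_fib1 h)
    · intro h; exact absurd hG (not_mem_of_mem_fib0 (Finset.mem_inter.mp h).1)
  · rw [mem_fib1 hG, Finset.mem_inter, mem_fib0, mem_fib1 hG, mem_dshift]
    have hins : i ∈ insert i G := Finset.mem_insert_self i G
    constructor
    · rintro (⟨H, hH, hHe⟩ | ⟨h1, -, h3⟩)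
      · exact absurd (hHe ▸ Finset.notMem_erase i H) (fun h => h hins)
      · rw [Finset.erase_insert hG] at h3
        exact ⟨⟨h3, hG⟩, h1⟩
    · rintro ⟨⟨h1, -⟩, h2⟩
      exact Or.inr ⟨h2, hins, by rwa [Finset.erase_insert hG]⟩

lemma fib0_dshift_comm {𝓖 : Finset (Finset (Fin n))} {i j : Fin n} (hij : j ≠ i) :
    fib0 (dshiftSet 𝓖 j) i = dshiftSet (fib0 𝓖 i) j := by
  classical
  ext G
  by_cases hG : i ∈ G
  · constructor
    · intro h; exact absurd hG (not_mem_of_mem_fib0 h)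
    · intro h
      rcases mem_dshift.mp h with ⟨H, hH, rfl⟩ | ⟨h1, -, -⟩
      · exact absurd (Finset.mem_of_mem_erase hG) (not_mem_of_mem_fib0 hH)
      · exact absurd hG (not_mem_of_mem_fib0 h1)
  · rw [mem_fib0, mem_dshift, mem_dshift]
    constructor
    · rintro ⟨(⟨H, hH, rfl⟩ | ⟨h1, h2, h3⟩), -⟩
      · left
        have hiH : i ∉ H := fun h => hG (Finset.mem_erase_of_ne_of_mem (Ne.symm hij) h)
        exact ⟨H, mem_fib0.mpr ⟨hH, hiH⟩, rfl⟩
      · exact Or.inr ⟨mem_fib0.mpr ⟨h1, hG⟩, h2,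
          mem_fib0.mpr ⟨h3, fun h => hG (Finset.mem_of_mem_erase h)⟩⟩
    · rintro (⟨H, hH, rfl⟩ | ⟨h1, h2, h3⟩)
      · exact ⟨Or.inl ⟨H, (mem_fib0.mp hH).1, rfl⟩, hG⟩
      · exact ⟨Or.inr ⟨(mem_fib0.mp h1).1, h2, (mem_fib0.mp h3).1⟩, hG⟩

lemma fib1_dshift_comm {𝓖 : Finset (Finset (Fin n))} {i j : Fin n} (hij : j ≠ i) :
    fib1 (dshiftSet 𝓖 j) i = dshiftSet (fib1 𝓖 i) j := by
  classical
  ext G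
  by_cases hG : i ∈ G
  · constructor
    · intro h; exact absurd hG (not_mem_of_mem_fib1 h)
    · intro h
      rcases mem_dshift.mp h with ⟨H, hH, rfl⟩ | ⟨h1, -, -⟩
      · exact absurd (Finset.mem_of_mem_erase hG) (not_mem_of_mem_fib1 hH)
      · exact absurd hG (not_mem_of_mem_fib1 h1)
  · rw [mem_fib1 hG, mem_dshift, mem_dshift]
    have hi' : i ∉ G.erase j := fun h => hG (Finset.mem_of_mem_erase h)
    constructor
    · rintro (⟨H, hH, hHe⟩ | ⟨h1, h2, h3⟩)
      · have hiH : i ∈ H := Finset.mem_of_mem_erase (hHe ▸ Finset.mem_insert_self i G)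
        refine Or.inl ⟨H.erase i, (mem_fib1 (Finset.notMem_erase i H)).mpr
          (by rwa [Finset.insert_erase hiH]), ?_⟩
        rw [Finset.erase_right_comm, hHe, Finset.erase_insert hG]
      · refine Or.inr ⟨(mem_fib1 hG).mpr h1, ?_, (mem_fib1 hi').mpr ?_⟩
        · rcases Finset.mem_insert.mp h2 with h | h
          · exact absurd h hij
          · exact h
        · rwa [← Finset.erase_insert_of_ne (Ne.symm hij)]
    · rintro (⟨K, hK, rfl⟩ | ⟨h1, h2, h3⟩)
      · have hiK : i ∉ K := not_mem_of_mem_fib1 hK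
        exact Or.inl ⟨insert i K, (mem_fib1 hiK).mp hK,
          Finset.erase_insert_of_ne (Ne.symm hij)⟩
      · refine Or.inr ⟨(mem_fib1 hG).mp h1, Finset.mem_insert_of_mem h2, ?_⟩
        rw [Finset.erase_insert_of_ne (Ne.symm hij)]
        exact (mem_fib1 hi').mp h3

lemma card_dshift (𝓖 : Finset (Finset (Fin n))) (i : Fin n) :
    (dshiftSet 𝓖 i).card = 𝓖.card := by
  rw [← card_fib 𝓖 i, ← card_fib (dshiftSet 𝓖 i) i, fib0_dshift_self, fib1_dshift_self,
    Finset.card_union_add_card_inter]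

lemma card_foldl (L : List (Fin n)) (𝓖 : Finset (Finset (Fin n))) :
    (L.foldl dshiftSet 𝓖).card = 𝓖.card := by
  induction L generalizing 𝓖 with
  | nil => rfl
  | cons j t ih => rw [List.foldl_cons, ih, card_dshift]

lemma fib0_foldl {L : List (Fin n)} {i : Fin n} (hi : i ∉ L)
    (𝓖 : Finset (Finset (Fin n))) :
    fib0 (L.foldl dshiftSet 𝓖) i = L.foldl dshiftSet (fib0 𝓖 i) := by
  induction L generalizing 𝓖 with
  | nil => rfl
  | cons j t ih =>
    simp only [List.foldl_cons]
    rw [ih (fun h => hi (List.mem_cons_of_mem j h)),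
      fib0_dshift_comm (fun h => hi (by rw [h]; exact List.mem_cons_self))]

lemma fib1_foldl {L : List (Fin n)} {i : Fin n} (hi : i ∉ L)
    (𝓖 : Finset (Finset (Fin n))) :
    fib1 (L.foldl dshiftSet 𝓖) i = L.foldl dshiftSet (fib1 𝓖 i) := by
  induction L generalizing 𝓖 with
  | nil => rfl
  | cons j t ih =>
    simp only [List.foldl_cons]
    rw [ih (fun h => hi (List.mem_cons_of_mem j h)),
      fib1_dshift_comm (fun h => hi (by rw [h]; exact List.mem_cons_self))]

lemma foldl_subsets {L : List (Fin n)} {𝓖 : Finset (Finset (Fin n))}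
    {Lset : Finset (Fin n)} (h : ∀ G ∈ 𝓖, G ⊆ Lset) :
    ∀ G ∈ L.foldl dshiftSet 𝓖, G ⊆ Lset := by
  induction L generalizing 𝓖 with
  | nil => exact h
  | cons j t ih => exact ih (dshift_subsets h)

end Downshift
section Construct
variable {n : ℕ}

lemma setMon_empty : setMon (∅ : Finset (Fin n)) = 0 := by
  ext i; simp [setMon_apply]

lemma lexLt_setMon_of_vars {σ : Equiv.Perm (Fin n)} {i : Fin n} {t : List (Fin n)}
    (hless : ∀ j ∈ t, σ.symm i < σ.symm j) (hitf : i ∉ t.toFinset)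
    {M : Finset (Fin n)} (hMsub : M ⊆ insert i t.toFinset) (hiM : i ∈ M)
    {m : Mon n} (hm : ∀ k, m k ≠ 0 → k ∈ t.toFinset) : lexLt σ m (setMon M) := by
  refine ⟨σ.symm i, ?_, ?_⟩
  · rw [Equiv.apply_symm_apply]
    have h0 : m i = 0 := by
      by_contra h
      exact hitf (hm i h)
    rw [h0, setMon_apply, if_pos hiM]
    exact Nat.zero_lt_one
  · intro l hl
    have hne : σ l ∉ t.toFinset := by
      intro hmem
      have := hless (σ l) (List.mem_toFinset.mp hmem)
      rw [Equiv.symm_apply_apply] at this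
      exact absurd (hl.trans this) (lt_irrefl l)
    have hnei : σ l ≠ i := by
      intro h
      have : l = σ.symm i := by rw [← h, Equiv.symm_apply_apply]
      exact absurd (this ▸ hl) (lt_irrefl _)
    have h1 : m (σ l) = 0 := by
      by_contra h
      exact hne (hm _ h)
    have h2 : σ l ∉ M := by
      intro h
      rcases Finset.mem_insert.mp (hMsub h) with h' | h'
      · exact hnei h'
      · exact hne h'
    rw [h1, setMon_apply, if_neg h2]

lemma construct {F : Type*} [Field F] (σ : Equiv.Perm (Fin n)) :
    ∀ L : List (Fin n), L.Pairwise (fun a b => σ.symm a < σ.symm b) →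
    ∀ 𝓖 : Finset (Finset (Fin n)), (∀ G ∈ 𝓖, G ⊆ L.toFinset) →
    ∀ M : Finset (Fin n), M ⊆ L.toFinset → M ∉ L.foldl dshiftSet 𝓖 →
    ∃ f : MvPolynomial (Fin n) F,
      (∀ G ∈ 𝓖, MvPolynomial.eval (charVec F G) f = 0) ∧
      MvPolynomial.coeff (setMon M) f = 1 ∧
      (∀ m ∈ f.support, m ≠ setMon M → lexLt σ m (setMon M)) ∧
      (∀ m ∈ f.support, ∀ k, m k ≠ 0 → k ∈ L.toFinset) := by
  classical
  intro L
  induction L with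
  | nil =>
    intro _ 𝓖 hG M hM hMf
    simp only [List.toFinset_nil] at hM hG
    have hM0 : M = ∅ := Finset.subset_empty.mp hM
    rw [List.foldl_nil] at hMf
    have hsupp1 : ∀ m ∈ (1 : MvPolynomial (Fin n) F).support, m = 0 := by
      intro m hm
      have := MvPolynomial.mem_support_iff.mp hm
      rw [MvPolynomial.coeff_one] at this
      by_contra h
      exact this (if_neg (fun h' => h h'.symm))
    refine ⟨1, ?_, ?_, ?_, ?_⟩
    · intro G hGmem
      exfalso
      have hGe : G = ∅ := Finset.subset_empty.mp (hG G hGmem)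
      exact hMf (by rwa [hM0, ← hGe])
    · rw [hM0, setMon_empty]
      simp [MvPolynomial.coeff_one]
    · intro m hm hne
      exact absurd (by rw [hsupp1 m hm, hM0, setMon_empty]) hne
    · intro m hm k hk
      rw [hsupp1 m hm] at hk
      simp at hk
  | cons i t ih =>
    intro hpair 𝓖 hG M hM hMf
    rw [List.pairwise_cons] at hpair
    obtain ⟨hless, hpt⟩ := hpair
    have hit : i ∉ t := fun h => lt_irrefl _ (hless i h)
    have hitf : i ∉ t.toFinset := fun h => hit (List.mem_toFinset.mp h)
    have htf : (i :: t).toFinset = insert i t.toFinset := List.toFinset_cons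
    rw [htf] at hG hM
    rw [List.foldl_cons] at hMf
    set A := fib0 𝓖 i with hA
    set B := fib1 𝓖 i with hB
    have hsubA : ∀ G ∈ A, G ⊆ t.toFinset := by
      intro G hGA k hk
      obtain ⟨h1, h2⟩ := mem_fib0.mp hGA
      rcases Finset.mem_insert.mp (hG G h1 hk) with h | h
      · exact absurd (h ▸ hk) h2
      · exact h
    have hsubB : ∀ G ∈ B, G ⊆ t.toFinset := by
      intro G hGB k hk
      have hiG := not_mem_of_mem_fib1 hGB
      have := hG _ ((mem_fib1 hiG).mp hGB) (Finset.mem_insert_of_mem hk)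
      rcases Finset.mem_insert.mp this with h | h
      · exact absurd (h ▸ hk) hiG
      · exact h
    by_cases hiM : i ∈ M
    · -- case `i ∈ M`
      have hMesub : M.erase i ⊆ t.toFinset := by
        intro k hk
        obtain ⟨hki, hkM⟩ := Finset.mem_erase.mp hk
        rcases Finset.mem_insert.mp (hM hkM) with h | h
        · exact absurd h hki
        · exact h
      have hM' : M.erase i ∉ t.foldl dshiftSet (A ∩ B) := by
        intro hmem
        apply hMf
        have h1 : M.erase i ∈ fib1 (t.foldl dshiftSet (dshiftSet 𝓖 i)) i := by
          rw [fib1_foldl hit, fib1_dshift_self]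
          exact hmem
        have h2 := (mem_fib1 (Finset.notMem_erase i M)).mp h1
        rwa [Finset.insert_erase hiM] at h2
      have hsubAB : ∀ G ∈ A ∩ B, G ⊆ t.toFinset :=
        fun G hGm => hsubA G (Finset.mem_inter.mp hGm).1
      obtain ⟨f', hvan', hcoef', hlex', hvars'⟩ :=
        ih hpt (A ∩ B) hsubAB (M.erase i) hMesub hM'
      obtain ⟨h, hinterp, hvarsh⟩ := exists_interp F t.toFinset (A ∪ B)
        (fun G hGm => (Finset.mem_union.mp hGm).elim (hsubA G) (hsubB G))
        (fun G => if G ∈ A then 0 else - MvPolynomial.eval (charVec F G) f')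
      refine ⟨X i * f' + h, ?_, ?_, ?_, ?_⟩
      · -- vanishing
        intro G hGmem
        rw [map_add, map_mul, MvPolynomial.eval_X]
        by_cases hiG : i ∈ G
        · have hKB : G.erase i ∈ B := by
            rw [hB, mem_fib1 (Finset.notMem_erase i G), Finset.insert_erase hiG]
            exact hGmem
          have hagree : ∀ (p : MvPolynomial (Fin n) F),
              (∀ m ∈ p.support, ∀ k, m k ≠ 0 → k ∈ t.toFinset) →
              MvPolynomial.eval (charVec F G) p =
                MvPolynomial.eval (charVec F (G.erase i)) p := by
            intro p hp
            apply eval_eq_of_agree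
            intro k hk
            obtain ⟨m, hm, hmk⟩ := hk
            have hkt := hp m hm k hmk
            have hki : k ≠ i := fun hh => hitf (hh ▸ hkt)
            simp [charVec, Finset.mem_erase, hki]
          rw [hagree f' hvars', hagree h hvarsh]
          have hiG1 : charVec F G i = 1 := by simp [charVec, hiG]
          rw [hiG1, one_mul, hinterp _ (Finset.mem_union_right _ hKB)]
          by_cases hKA : G.erase i ∈ A
          · rw [if_pos hKA, hvan' _ (Finset.mem_inter.mpr ⟨hKA, hKB⟩)]
            ring
          · rw [if_neg hKA]
            ring
        · have hiG0 : charVec F G i = 0 := by simp [charVec, hiG]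
          have hGA : G ∈ A := mem_fib0.mpr ⟨hGmem, hiG⟩
          rw [hiG0, zero_mul, zero_add, hinterp _ (Finset.mem_union_left _ hGA),
            if_pos hGA]
      · -- leading coefficient
        rw [MvPolynomial.coeff_add, setMon_erase hiM, MvPolynomial.coeff_X_mul, hcoef']
        have hch : MvPolynomial.coeff (Finsupp.single i 1 + setMon (M.erase i)) h = 0 := by
          by_contra hc
          have hmem := MvPolynomial.mem_support_iff.mpr hc
          have := hvarsh _ hmem i (by simp [Finsupp.add_apply, Finsupp.single_apply])
          exact hitf this
        rw [hch, add_zero]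
      · -- lex condition
        intro m hm hne
        rcases Finset.mem_union.mp (MvPolynomial.support_add hm) with hm1 | hm2
        · rw [MvPolynomial.support_X_mul] at hm1
          obtain ⟨m', hm', hmeq⟩ := Finset.mem_map.mp hm1
          rw [addLeftEmbedding_apply] at hmeq
          subst hmeq
          have hne' : m' ≠ setMon (M.erase i) := by
            intro hh
            exact hne (by rw [hh, ← setMon_erase hiM])
          have hlt := hlex' m' hm' hne'
          have := lexLt_add_right (Finsupp.single i 1) hlt
          rw [add_comm m' _, add_comm (setMon (M.erase i)) _, ← setMon_erase hiM] at this
          exact this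
        · exact lexLt_setMon_of_vars hless hitf hM hiM (hvarsh m hm2)
      · -- variables
        intro m hm k hk
        rw [htf]
        rcases Finset.mem_union.mp (MvPolynomial.support_add hm) with hm1 | hm2
        · rw [MvPolynomial.support_X_mul] at hm1
          obtain ⟨m', hm', hmeq⟩ := Finset.mem_map.mp hm1
          rw [addLeftEmbedding_apply] at hmeq
          subst hmeq
          by_cases hki : k = i
          · subst hki
            exact Finset.mem_insert_self k _
          · apply Finset.mem_insert_of_mem
            apply hvars' m' hm' k
            intro hc
            apply hk
            simp [Finsupp.add_apply, Finsupp.single_apply, hc, Ne.symm hki]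
        · exact Finset.mem_insert_of_mem (hvarsh m hm2 k hk)
    · -- case `i ∉ M`
      have hMsubt : M ⊆ t.toFinset := by
        intro k hk
        rcases Finset.mem_insert.mp (hM hk) with h | h
        · exact absurd (h ▸ hk) hiM
        · exact h
      have hM' : M ∉ t.foldl dshiftSet (A ∪ B) := by
        intro hmem
        apply hMf
        have h1 : M ∈ fib0 (t.foldl dshiftSet (dshiftSet 𝓖 i)) i := by
          rw [fib0_foldl hit, fib0_dshift_self]
          exact hmem
        exact (mem_fib0.mp h1).1
      have hsubAB : ∀ G ∈ A ∪ B, G ⊆ t.toFinset :=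
        fun G hGm => (Finset.mem_union.mp hGm).elim (hsubA G) (hsubB G)
      obtain ⟨f, hvan, hcoef, hlex, hvars⟩ := ih hpt (A ∪ B) hsubAB M hMsubt hM'
      refine ⟨f, ?_, hcoef, hlex, ?_⟩
      · intro G hGmem
        by_cases hiG : i ∈ G
        · have hKB : G.erase i ∈ B := by
            rw [hB, mem_fib1 (Finset.notMem_erase i G), Finset.insert_erase hiG]
            exact hGmem
          have heq : MvPolynomial.eval (charVec F G) f =
              MvPolynomial.eval (charVec F (G.erase i)) f := by
            apply eval_eq_of_agree
            intro k hk
            obtain ⟨m, hm, hmk⟩ := hk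
            have hkt := hvars m hm k hmk
            have hki : k ≠ i := fun hh => hitf (hh ▸ hkt)
            simp [charVec, Finset.mem_erase, hki]
          rw [heq]
          exact hvan _ (Finset.mem_union_right _ hKB)
        · exact hvan _ (Finset.mem_union_left _ (mem_fib0.mpr ⟨hGmem, hiG⟩))
      · intro m hm k hk
        rw [htf]
        exact Finset.mem_insert_of_mem (hvars m hm k hk)

end Construct
section Reduce
variable {n : ℕ}

lemma reduce {F : Type*} [Field F] {σ : Equiv.Perm (Fin n)} {lin : LinearOrder (Mon n)}
    (hlin : IsLexOrder σ lin) (I : Ideal (MvPolynomial (Fin n) F))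
    (p : MvPolynomial (Fin n) F) :
    ∃ g : MvPolynomial (Fin n) F, (∀ m ∈ g.support, m ∈ stdMon lin I) ∧ p - g ∈ I := by
  classical
  suffices h : ∀ u : Mon n, ∀ p : MvPolynomial (Fin n) F, IsLeadMon lin p u →
      ∃ g, (∀ m ∈ g.support, m ∈ stdMon lin I) ∧ p - g ∈ I by
    by_cases hp0 : p = 0
    · exact ⟨0, by simp, by simp [hp0]⟩
    · obtain ⟨u, hu⟩ := exists_leadMon lin hp0
      exact h u p hu
  intro u
  refine (lexLt_wf σ).induction (C := fun u => ∀ p : MvPolynomial (Fin n) F,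
    IsLeadMon lin p u → ∃ g, (∀ m ∈ g.support, m ∈ stdMon lin I) ∧ p - g ∈ I) u ?_
  intro u IH p hp
  have hc : MvPolynomial.coeff u p ≠ 0 := MvPolynomial.mem_support_iff.mp hp.1
  by_cases hstd : u ∈ stdMon lin I
  · set p' := p - MvPolynomial.monomial u (MvPolynomial.coeff u p) with hp'def
    have hco : ∀ m, m ≠ u → MvPolynomial.coeff m p' = MvPolynomial.coeff m p := by
      intro m hm
      simp [hp'def, MvPolynomial.coeff_sub, MvPolynomial.coeff_monomial, Ne.symm hm]
    have hcu : MvPolynomial.coeff u p' = 0 := by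
      simp [hp'def, MvPolynomial.coeff_sub, MvPolynomial.coeff_monomial]
    have hkey : ∀ g', (∀ m ∈ g'.support, m ∈ stdMon lin I) → p' - g' ∈ I →
        ∃ g, (∀ m ∈ g.support, m ∈ stdMon lin I) ∧ p - g ∈ I := by
      intro g' hg' hgI
      refine ⟨g' + MvPolynomial.monomial u (MvPolynomial.coeff u p), ?_, ?_⟩
      · intro m hm
        rcases Finset.mem_union.mp (MvPolynomial.support_add hm) with h | h
        · exact hg' m h
        · rw [MvPolynomial.support_monomial, if_neg hc] at h
          exact (Finset.mem_singleton.mp h) ▸ hstd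
      · have heq : p - (g' + MvPolynomial.monomial u (MvPolynomial.coeff u p))
            = p' - g' := by rw [hp'def]; ring
        rw [heq]; exact hgI
    by_cases hp'0 : p' = 0
    · exact hkey 0 (by simp) (by simp [hp'0])
    · obtain ⟨u', hu'⟩ := exists_leadMon lin hp'0
      have hne : u' ≠ u := fun h => MvPolynomial.mem_support_iff.mp hu'.1 (h ▸ hcu)
      have hlt : lexLt σ u' u := by
        have hmem : u' ∈ p.support := by
          rw [MvPolynomial.mem_support_iff, ← hco u' hne]
          exact MvPolynomial.mem_support_iff.mp hu'.1
        exact (hlin u' u).mp (@lt_of_le_of_ne _ lin.toPartialOrder _ _ (hp.2 u' hmem) hne)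
      obtain ⟨g', hg', hgI⟩ := IH u' hlt p' hu'
      exact hkey g' hg' hgI
  · simp only [stdMon, Set.mem_setOf_eq, not_not] at hstd
    obtain ⟨q, hqI, hq0, hqlead⟩ := hstd
    have hd : MvPolynomial.coeff u q ≠ 0 := MvPolynomial.mem_support_iff.mp hqlead.1
    set c := MvPolynomial.coeff u p / MvPolynomial.coeff u q with hcdef
    set p' := p - MvPolynomial.C c * q with hp'def
    have hcu : MvPolynomial.coeff u p' = 0 := by
      simp only [hp'def, MvPolynomial.coeff_sub, MvPolynomial.coeff_C_mul, hcdef]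
      rw [div_mul_cancel₀ _ hd, sub_self]
    have hsub : p - p' ∈ I := by
      have heq : p - p' = MvPolynomial.C c * q := by rw [hp'def]; ring
      rw [heq]
      exact Ideal.mul_mem_left _ _ hqI
    by_cases hp'0 : p' = 0
    · exact ⟨0, by simp, by simpa [hp'0] using hsub⟩
    · obtain ⟨u', hu'⟩ := exists_leadMon lin hp'0
      have hne : u' ≠ u := fun h => MvPolynomial.mem_support_iff.mp hu'.1 (h ▸ hcu)
      have hle : lin.le u' u := by
        have h1 : MvPolynomial.coeff u' p' ≠ 0 := MvPolynomial.mem_support_iff.mp hu'.1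
        by_cases h2 : MvPolynomial.coeff u' p = 0
        · have h3 : MvPolynomial.coeff u' q ≠ 0 := by
            intro h4
            apply h1
            simp [hp'def, MvPolynomial.coeff_sub, MvPolynomial.coeff_C_mul, h2, h4]
          exact hqlead.2 u' (MvPolynomial.mem_support_iff.mpr h3)
        · exact hp.2 u' (MvPolynomial.mem_support_iff.mpr h2)
      have hlt : lexLt σ u' u :=
        (hlin u' u).mp (@lt_of_le_of_ne _ lin.toPartialOrder _ _ hle hne)
      obtain ⟨g', hg', hgI⟩ := IH u' hlt p' hu'
      refine ⟨g', hg', ?_⟩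
      have heq : p - g' = (p - p') + (p' - g') := by ring
      rw [heq]
      exact Ideal.add_mem I hsub hgI

end Reduce
section Counting
variable {n : ℕ}

open scoped Classical in
lemma stdMon_squarefree {F : Type*} [Field F] {σ : Equiv.Perm (Fin n)}
    {lin : LinearOrder (Mon n)} (hlin : IsLexOrder σ lin)
    (𝓕 : Finset (Finset (Fin n))) {m : Mon n}
    (hm : m ∈ stdMon lin (vanishIdeal
      ((𝓕.image (charVec F) : Finset (Fin n → F)) : Set (Fin n → F))))
    (k : Fin n) : m k ≤ 1 := by
  classical
  by_contra hk
  push_neg at hk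
  apply hm
  set m' := m - Finsupp.single k 1 with hm'def
  have hm'app : ∀ l, m' l = m l - (if k = l then 1 else 0) := by
    intro l
    rw [hm'def, Finsupp.tsub_apply, Finsupp.single_apply]
  have hm'le : ∀ l, m' l ≤ m l := fun l => by rw [hm'app l]; omega
  have hm'ne : m' ≠ m := by
    intro h
    have h1 : m' k = m k := by rw [h]
    have h2 := hm'app k
    simp at h2
    omega
  refine ⟨MvPolynomial.monomial m 1 - MvPolynomial.monomial m' 1, ?_, ?_, ?_, ?_⟩
  · -- membership in the vanishing ideal
    intro v hv
    obtain ⟨G, hG, rfl⟩ := Finset.mem_image.mp (Finset.mem_coe.mp hv)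
    rw [map_sub, MvPolynomial.eval_monomial, MvPolynomial.eval_monomial, one_mul, one_mul]
    rw [Finsupp.prod_fintype _ _ (fun _ => pow_zero _),
      Finsupp.prod_fintype _ _ (fun _ => pow_zero _)]
    rw [sub_eq_zero]
    by_cases hkG : k ∈ G
    · apply Finset.prod_congr rfl
      intro l _
      by_cases hlk : l = k
      · subst hlk
        have h1 : charVec F G l = 1 := by simp [charVec, hkG]
        rw [h1, one_pow, one_pow]
      · have heq : m' l = m l := by
          rw [hm'app l, if_neg (fun h : k = l => hlk h.symm)]
          omega
        rw [heq]
    · have h0 : charVec F G k = 0 := by simp [charVec, hkG]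
      have hz1 : (∏ l, charVec F G l ^ m l) = 0 :=
        Finset.prod_eq_zero (Finset.mem_univ k) (by rw [h0]; exact zero_pow (by omega))
      have hz2 : (∏ l, charVec F G l ^ m' l) = 0 :=
        Finset.prod_eq_zero (Finset.mem_univ k) (by
          rw [h0]
          refine zero_pow ?_
          have h2 := hm'app k
          simp at h2
          omega)
      rw [hz1, hz2]
  · -- nonzero
    rw [MvPolynomial.ne_zero_iff]
    refine ⟨m, ?_⟩
    rw [MvPolynomial.coeff_sub, MvPolynomial.coeff_monomial, MvPolynomial.coeff_monomial,
      if_pos rfl, if_neg hm'ne]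
    simp
  · -- lead monomial: membership in support
    rw [MvPolynomial.mem_support_iff, MvPolynomial.coeff_sub,
      MvPolynomial.coeff_monomial, MvPolynomial.coeff_monomial, if_pos rfl, if_neg hm'ne]
    simp
  · -- maximality
    intro m'' hm''
    rw [MvPolynomial.mem_support_iff, MvPolynomial.coeff_sub,
      MvPolynomial.coeff_monomial, MvPolynomial.coeff_monomial] at hm''
    by_cases h1 : m = m''
    · exact h1 ▸ @le_refl _ lin.toPreorder m
    · by_cases h2 : m' = m''
      · subst h2
        exact le_of_lexLt hlin (lexLt_of_le_of_ne hm'le hm'ne)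
      · rw [if_neg h1, if_neg h2] at hm''
        simp at hm''

lemma setMon_support_eq {m : Mon n} (h : ∀ k, m k ≤ 1) : setMon m.support = m := by
  ext k
  rw [setMon_apply]
  by_cases hk : k ∈ m.support
  · rw [if_pos hk]
    have h1 := Finsupp.mem_support_iff.mp hk
    have h2 := h k
    omega
  · rw [if_neg hk]
    exact (Finsupp.notMem_support_iff.mp hk).symm

open scoped Classical in
lemma card_le_stdMon {F : Type*} [Field F] {σ : Equiv.Perm (Fin n)}
    {lin : LinearOrder (Mon n)} (hlin : IsLexOrder σ lin)
    (𝓕 : Finset (Finset (Fin n))) (S : Finset (Mon n))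
    (hS : ∀ m ∈ stdMon lin (vanishIdeal
      ((𝓕.image (charVec F) : Finset (Fin n → F)) : Set (Fin n → F))), m ∈ S) :
    (𝓕.image (charVec F)).card ≤ S.card := by
  classical
  set V := 𝓕.image (charVec F) with hV
  set I := vanishIdeal (V : Set (Fin n → F)) with hI
  set E : MvPolynomial (Fin n) F →ₗ[F] (↥V → F) :=
    { toFun := fun p v => MvPolynomial.eval v.1 p
      map_add' := fun p q => by funext v; simp
      map_smul' := fun c p => by funext v; simp } with hE
  set Simg : Finset (↥V → F) := S.image (fun m => E (MvPolynomial.monomial m 1)) with hSimg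
  have hspan : Submodule.span F (Simg : Set (↥V → F)) = ⊤ := by
    rw [eq_top_iff]
    intro φ _
    obtain ⟨p, hp, -⟩ := exists_interp F Finset.univ 𝓕 (fun G _ => Finset.subset_univ G)
      (fun G => if h : charVec F G ∈ V then φ ⟨_, h⟩ else 0)
    obtain ⟨g, hgsupp, hgI⟩ := reduce hlin I p
    have hEg : E g = φ := by
      funext v
      obtain ⟨G, hG, hGv⟩ := Finset.mem_image.mp v.2
      have h2 : MvPolynomial.eval v.1 (p - g) = 0 := hgI v.1 (Finset.mem_coe.mpr v.2)
      rw [map_sub, sub_eq_zero] at h2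
      have h3 : E g v = MvPolynomial.eval v.1 p := h2.symm
      rw [h3, ← hGv, hp G hG, dif_pos (hGv ▸ v.2)]
      congr 1
      exact Subtype.ext hGv
    have hmem : E g ∈ Submodule.span F (Simg : Set (↥V → F)) := by
      have hg : g = ∑ mm ∈ g.support, MvPolynomial.monomial mm (MvPolynomial.coeff mm g) :=
        MvPolynomial.as_sum g
      rw [show E g = ∑ mm ∈ g.support,
          MvPolynomial.coeff mm g • E (MvPolynomial.monomial mm 1) by
        conv_lhs => rw [hg]
        rw [map_sum]
        apply Finset.sum_congr rfl
        intro mm _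
        rw [← map_smul, MvPolynomial.smul_monomial, smul_eq_mul, mul_one]]
      apply Submodule.sum_mem
      intro mm hmm
      exact Submodule.smul_mem _ _ (Submodule.subset_span
        (Finset.mem_coe.mpr (Finset.mem_image_of_mem _ (hS mm (hgsupp mm hmm)))))
    rwa [hEg] at hmem
  have h1 : V.card = Module.finrank F (↥V → F) := by
    rw [Module.finrank_pi, Fintype.card_coe]
  have h2 : Module.finrank F (↥V → F) =
      Module.finrank F (Submodule.span F (Simg : Set (↥V → F))) := by
    rw [hspan, finrank_top]
  have h3 : Module.finrank F (Submodule.span F (Simg : Set (↥V → F))) ≤ Simg.card :=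
    finrank_span_finset_le_card Simg
  have h4 : Simg.card ≤ S.card := Finset.card_image_le
  omega

end Counting
open scoped Classical in
/-- Proposition `Smdownshift`.
For a set system `𝓕 ⊆ 2^[n]` and the lex order induced by
`x_{σ 0} ≻ x_{σ 1} ≻ ⋯ ≻ x_{σ(n-1)}`, identifying squarefree monomials with subsets of
`[n]`, `Sm(I(𝓕)) = D_{σ(n-1),…,σ 0}(𝓕)`. -/
theorem stdMon_eq_iterated_downshift_setSystem {n : ℕ} {F : Type*} [Field F]
    (𝓕 : Finset (Finset (Fin n))) (σ : Equiv.Perm (Fin n))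
    (lin : LinearOrder (Mon n)) (hlin : IsLexOrder σ lin) :
    stdMon lin (vanishIdeal ((𝓕.image (charVec F) : Finset (Fin n → F)) :
        Set (Fin n → F)))
      = (((iterDshiftSet σ 𝓕).image setMon : Finset (Mon n)) : Set (Mon n)) := by
  classical
  have hLuniv : ∀ k : Fin n, k ∈ (List.ofFn fun j : Fin n => σ j).toFinset := by
    intro k
    rw [List.mem_toFinset, List.mem_ofFn]
    exact ⟨σ.symm k, Equiv.apply_symm_apply σ k⟩
  have hpair : (List.ofFn fun j : Fin n => σ j).Pairwise
      (fun a b => σ.symm a < σ.symm b) := by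
    rw [List.pairwise_ofFn]
    intro i j hij
    simpa using hij
  -- the inclusion `Sm(I(𝓕)) ⊆ setMon '' D(𝓕)`
  have hsub : stdMon lin (vanishIdeal ((𝓕.image (charVec F) : Finset (Fin n → F)) :
      Set (Fin n → F))) ⊆
      (((iterDshiftSet σ 𝓕).image setMon : Finset (Mon n)) : Set (Mon n)) := by
    intro m hm
    have hsf : ∀ k, m k ≤ 1 := fun k => stdMon_squarefree hlin 𝓕 hm k
    have hms : setMon m.support = m := setMon_support_eq hsf
    by_contra hc
    have hnot : m.support ∉ iterDshiftSet σ 𝓕 := by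
      intro hmem
      apply hc
      rw [Finset.mem_coe, ← hms]
      exact Finset.mem_image_of_mem setMon hmem
    obtain ⟨f, hvan, hcoef, hlexc, hvars⟩ := construct (F := F) σ
      (List.ofFn fun j : Fin n => σ j) hpair 𝓕
      (fun G _ k _ => hLuniv k) m.support (fun k _ => hLuniv k) hnot
    rw [hms] at hcoef hlexc
    apply hm
    refine ⟨f, ?_, ?_, ?_, ?_⟩
    · intro v hv
      obtain ⟨G, hG, rfl⟩ := Finset.mem_image.mp (Finset.mem_coe.mp hv)
      exact hvan G hG
    · rw [MvPolynomial.ne_zero_iff]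
      exact ⟨m, by rw [hcoef]; exact one_ne_zero⟩
    · exact MvPolynomial.mem_support_iff.mpr (by rw [hcoef]; exact one_ne_zero)
    · intro m'' hm''
      by_cases h : m'' = m
      · exact h ▸ @le_refl _ lin.toPreorder m''
      · exact le_of_lexLt hlin (hlexc m'' hm'' h)
  -- cardinality comparison
  have hcardT : ((iterDshiftSet σ 𝓕).image setMon).card = (𝓕.image (charVec F)).card := by
    rw [Finset.card_image_of_injective _ setMon_injective,
      Finset.card_image_of_injective _ (charVec_injective F)]
    exact card_foldl _ 𝓕
  have hstd_eq : stdMon lin (vanishIdeal ((𝓕.image (charVec F) : Finset (Fin n → F)) :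
      Set (Fin n → F))) =
      ↑(((iterDshiftSet σ 𝓕).image setMon).filter
        (fun m => m ∈ stdMon lin (vanishIdeal ((𝓕.image (charVec F) :
          Finset (Fin n → F)) : Set (Fin n → F))))) := by
    ext m
    simp only [Finset.coe_filter, Set.mem_setOf_eq]
    exact ⟨fun h => ⟨hsub h, h⟩, fun h => h.2⟩
  have hcard : (𝓕.image (charVec F)).card ≤
      (((iterDshiftSet σ 𝓕).image setMon).filter
        (fun m => m ∈ stdMon lin (vanishIdeal ((𝓕.image (charVec F) :
          Finset (Fin n → F)) : Set (Fin n → F))))).card := by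
    apply card_le_stdMon hlin 𝓕
    intro m hm
    rw [hstd_eq] at hm
    exact_mod_cast hm
  have hTS : (((iterDshiftSet σ 𝓕).image setMon).filter
      (fun m => m ∈ stdMon lin (vanishIdeal ((𝓕.image (charVec F) :
        Finset (Fin n → F)) : Set (Fin n → F))))) = (iterDshiftSet σ 𝓕).image setMon :=
    Finset.eq_of_subset_of_card_le (Finset.filter_subset _ _) (by rw [hcardT]; exact hcard)
  rw [hstd_eq, hTS]
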